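/- Let W be a contraction on a Hilbert space H with minimal isometric dilation U₊ on K₊, let U' be a unitary operator on H', and let Λ ∈ L(H', H) satisfy WΛ = ΛU'. Then the range of the lifted operator Λ₊ = s-lim_{n→∞} U₊ⁿ Λ U'⁻ⁿ is contained in the residual subspace R := ⋂_{n≥0} U₊ⁿ K₊. -/

import Mathlib

open scoped InnerProductSpace
open Filter

/-- The range of the lifted operator `Λ₊ = s-lim Upⁿ Λ U'⁻ⁿ` is contained in
the residual subspace `R = ⋂_{n≥0} Upⁿ K₊` of the minimal isometric dilation. -/
theorem lifted_range_in_residual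
    {H H' K : Type*}
    [NormedAddCommGroup H] [InnerProductSpace ℂ H] [CompleteSpace H]
    [NormedAddCommGroup H'] [InnerProductSpace ℂ H'] [CompleteSpace H']
    [NormedAddCommGroup K] [InnerProductSpace ℂ K] [CompleteSpace K]
    (J : H →ₗᵢ[ℂ] K)
    (W : H →L[ℂ] H) (hW : ‖W‖ ≤ 1)
    (Up : K →L[ℂ] K) (hUp : ∀ x, ‖Up x‖ = ‖x‖)
    (hdil : ∀ (n : ℕ) (h : H),
      (W ^ n) h = (ContinuousLinearMap.adjoint J.toContinuousLinearMap) ((Up ^ n) (J h)))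
    (hmin : Dense (↑(Submodule.span ℂ {x : K | ∃ (n : ℕ) (h : H), x = (Up ^ n) (J h)}) : Set K))
    (U' : H' ≃ₗᵢ[ℂ] H')
    (Λ : H' →L[ℂ] H)
    (hint : ∀ x, W (Λ x) = Λ (U' x))
    (Λp : H' →L[ℂ] K)
    (hΛp : ∀ x, Tendsto (fun n : ℕ => (Up ^ n) (J (Λ ((U'.symm ^ n) x)))) atTop (nhds (Λp x))) :
    ∀ (x : H') (n : ℕ), Λp x ∈ Set.range (Up ^ n) := by
  intro x n
  have hnorm : ∀ (m : ℕ) (y : K), ‖(Up ^ m) y‖ = ‖y‖ := by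
    intro m
    induction m with
    | zero => simp
    | succ k ih =>
      intro y
      rw [pow_succ, ContinuousLinearMap.mul_apply, ih, hUp]
  have hiso : Isometry (Up ^ n) := AddMonoidHomClass.isometry_of_norm _ (hnorm n)
  have hclosed : IsClosed (Set.range (Up ^ n)) :=
    hiso.isClosedEmbedding.isClosed_range
  have h2 : Tendsto (fun m : ℕ => (Up ^ (n + m)) (J (Λ ((U'.symm ^ (n + m)) x)))) atTop
      (nhds (Λp x)) := by
    have := (hΛp x).comp (tendsto_add_atTop_nat n)
    simpa [Function.comp_def, Nat.add_comm] using this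
  refine hclosed.mem_of_tendsto h2 (Filter.Eventually.of_forall fun m => ?_)
  rw [pow_add, ContinuousLinearMap.mul_apply]
  exact ⟨_, rfl⟩
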